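/- Let s(z) be a real polynomial with no zeros in the closed disk |z| ≤ 1+2C for some C > 0, and suppose (1+C)/a < 1 for some a > 1. Let S_k(z) = (1−z)s(z) + E_k(z) where sup_{|z|=1+C} |E_k(z)| = O(((1+C)/a)^k). Then for all sufficiently large k, S_k has exactly one root in the disk {z : |z| ≤ 1+C}, and that root is simple. -/

import Mathlib

open Polynomial Metric Set

lemma deriv_norm_le_of_ball_bound (f : ℂ → ℂ) (x : ℂ) (ρ M : ℝ) (hρ : 0 < ρ)
    (hd : DifferentiableOn ℂ f (ball x ρ))
    (hb : ∀ w ∈ ball x ρ, ‖f w‖ ≤ M) : ‖deriv f x‖ ≤ 2 * M / ρ := by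
  have key : ∀ δ : ℝ, 0 < δ → ‖deriv f x‖ ≤ 2 * M / ρ + δ := by
    intro δ hδ
    have maps : Set.MapsTo f (ball x ρ) (ball (f x) (2 * M + δ * ρ)) := by
      intro w hw
      have h1 := hb w hw
      have h2 := hb x (mem_ball_self hρ)
      have hdist : dist (f w) (f x) ≤ 2 * M := by
        rw [dist_eq_norm]
        calc ‖f w - f x‖ ≤ ‖f w‖ + ‖f x‖ := norm_sub_le _ _
          _ ≤ 2 * M := by linarith
      exact Metric.mem_ball.2 (lt_of_le_of_lt hdist (by nlinarith))
    have h := Complex.norm_deriv_le_div_of_mapsTo_ball hd (maps.mono_right ball_subset_closedBall) hρ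
    calc ‖deriv f x‖ ≤ (2 * M + δ * ρ) / ρ := h
      _ = 2 * M / ρ + δ := by field_simp
  exact le_of_forall_pos_le_add key

set_option maxHeartbeats 1000000 in
theorem perturbed_denominator_unique_simple_root
    (s : Polynomial ℝ) (C a : ℝ) (hC : 0 < C) (ha : 1 < a)
    (hCa : (1 + C) / a < 1)
    (hs : ∀ z : ℂ, ‖z‖ ≤ 1 + 2 * C → (s.map (algebraMap ℝ ℂ)).eval z ≠ 0)
    (E : ℕ → Polynomial ℂ)
    (hE : ∃ D : ℝ, ∀ k : ℕ, ∀ z : ℂ, ‖z‖ = 1 + C →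
      ‖(E k).eval z‖ ≤ D * ((1 + C) / a) ^ k) :
    ∃ K : ℕ, ∀ k ≥ K,
      ∃ z : ℂ, ‖z‖ ≤ 1 + C ∧
        ((1 - X) * s.map (algebraMap ℝ ℂ) + E k).IsRoot z ∧
        ((1 - X) * s.map (algebraMap ℝ ℂ) + E k).rootMultiplicity z = 1 ∧
        ∀ w : ℂ, ‖w‖ ≤ 1 + C →
          ((1 - X) * s.map (algebraMap ℝ ℂ) + E k).IsRoot w → w = z := by
  obtain ⟨D, hD⟩ := hE
  set sc : Polynomial ℂ := s.map (algebraMap ℝ ℂ) with hsc_def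
  have hC1 : (0:ℝ) < 1 + C := by linarith
  have ha0 : (0:ℝ) < a := by linarith
  set r : ℝ := (1 + C) / a with hr_def
  have hr0 : 0 < r := div_pos hC1 ha0
  -- D ≥ 0
  have hD0 : 0 ≤ D := by
    have h1 : ‖((1 + C : ℝ) : ℂ)‖ = 1 + C := by
      rw [Complex.norm_real, Real.norm_eq_abs]; exact abs_of_pos hC1
    have := hD 0 ((1 + C : ℝ) : ℂ) h1
    simp only [pow_zero, mul_one] at this
    exact le_trans (norm_nonneg _) this
  -- minimum of |sc| on the closed disk of radius 1+2C
  have hcont : ContinuousOn (fun z : ℂ => ‖sc.eval z‖) (closedBall 0 (1 + 2*C)) :=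
    (continuous_norm.comp sc.continuous_aeval).continuousOn
  have hne : (closedBall (0:ℂ) (1 + 2*C)).Nonempty := ⟨0, by simp; linarith⟩
  obtain ⟨zm, hzm, hzmin'⟩ := (isCompact_closedBall (0:ℂ) (1 + 2*C)).exists_isMinOn hne hcont
  have hzmin := isMinOn_iff.1 hzmin'
  set m : ℝ := ‖sc.eval zm‖ with hm_def
  have habs_mem : ∀ w : ℂ, ‖w‖ ≤ 1 + 2*C → w ∈ closedBall (0:ℂ) (1 + 2*C) := by
    intro w hw; simpa [Complex.dist_eq] using hw
  have hm0 : 0 < m := by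
    have : sc.eval zm ≠ 0 := hs zm (by simpa [Complex.dist_eq] using hzm)
    simpa [hm_def] using (norm_pos_iff.2 this)
  have hm_lb : ∀ w : ℂ, ‖w‖ ≤ 1 + 2*C → m ≤ ‖sc.eval w‖ := by
    intro w hw; exact hzmin w (habs_mem w hw)
  -- maximum of |sc'| on the closed disk
  have hcont' : ContinuousOn (fun z : ℂ => ‖sc.derivative.eval z‖)
      (closedBall 0 (1 + 2*C)) :=
    (continuous_norm.comp sc.derivative.continuous_aeval).continuousOn
  obtain ⟨zM, hzM, hzmax'⟩ := (isCompact_closedBall (0:ℂ) (1 + 2*C)).exists_isMaxOn hne hcont'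
  have hzmax := isMaxOn_iff.1 hzmax'
  set M₂ : ℝ := ‖sc.derivative.eval zM‖ with hM2_def
  have hM2_nonneg : 0 ≤ M₂ := norm_nonneg _
  have hM2_ub : ∀ w : ℂ, ‖w‖ ≤ 1 + 2*C → ‖sc.derivative.eval w‖ ≤ M₂ := by
    intro w hw; exact hzmax w (habs_mem w hw)
  -- choice of ε and K
  set ε : ℝ := min (m * C / 32) (m * m / (4 * (M₂ + 1))) with hε_def
  clear_value m M₂
  have hε0 : 0 < ε := lt_min (by positivity)
    (div_pos (by positivity) (by linarith))
  have htend : Filter.Tendsto (fun k : ℕ => r ^ k) Filter.atTop (nhds 0) :=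
    tendsto_pow_atTop_nhds_zero_of_lt_one hr0.le hCa
  have hev : ∀ᶠ k in Filter.atTop, r ^ k < ε / (D + 1) :=
    htend.eventually_lt_const (div_pos hε0 (by linarith))
  obtain ⟨K, hK⟩ := Filter.eventually_atTop.1 hev
  refine ⟨K, fun k hk => ?_⟩
  set Ek : Polynomial ℂ := E k with hEk_def
  set εk : ℝ := D * r ^ k with hεk_def
  have hεk0 : 0 ≤ εk := mul_nonneg hD0 (pow_nonneg hr0.le k)
  have hεkε : εk ≤ ε := by
    have h1 := hK k hk
    have h2 : (0:ℝ) ≤ r ^ k := pow_nonneg hr0.le k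
    have h3 : (0:ℝ) < D + 1 := by linarith
    have : D * r ^ k ≤ (D + 1) * (ε / (D + 1)) := by nlinarith
    rwa [mul_div_cancel₀ _ h3.ne'] at this
  have hεA : εk ≤ m * C / 32 := hεkε.trans (min_le_left _ _)
  have hεB : εk ≤ m * m / (4 * (M₂ + 1)) := hεkε.trans (min_le_right _ _)
  -- maximum-modulus bound for Ek on the closed disk of radius 1+C
  have boundE : ∀ w : ℂ, ‖w‖ ≤ 1 + C → ‖Ek.eval w‖ ≤ εk := by
    intro w hw
    have hU : Bornology.IsBounded (ball (0:ℂ) (1 + C)) := isBounded_ball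
    have hd : DiffContOnCl ℂ (fun z => Ek.eval z) (ball (0:ℂ) (1 + C)) :=
      Ek.differentiable_aeval.diffContOnCl
    have hfr : ∀ z ∈ frontier (ball (0:ℂ) (1 + C)), ‖Ek.eval z‖ ≤ εk := by
      intro z hz
      rw [frontier_ball 0 hC1.ne'] at hz
      have : ‖z‖ = 1 + C := by simpa [Complex.dist_eq] using hz
      simpa using hD k z this
    have hcl : w ∈ closure (ball (0:ℂ) (1 + C)) := by
      rw [closure_ball 0 hC1.ne']
      simpa [Complex.dist_eq] using hw
    simpa using
      Complex.norm_le_of_forall_mem_frontier_norm_le hU hd hfr hcl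
  clear_value ε εk
  -- the auxiliary holomorphic map
  set h : ℂ → ℂ := fun w => Ek.eval w / sc.eval w with hh_def
  set g : ℂ → ℂ := fun w => 1 + h w with hg_def
  have hsub : ∀ w : ℂ, ‖w‖ ≤ 1 + C → ‖w‖ ≤ 1 + 2*C := by
    intro w hw; linarith
  have hscne : ∀ w : ℂ, ‖w‖ ≤ 1 + C → sc.eval w ≠ 0 :=
    fun w hw => hs w (hsub w hw)
  have hdiffh : ∀ w : ℂ, ‖w‖ ≤ 1 + C → DifferentiableAt ℂ h w := by
    intro w hw
    exact (Ek.differentiable_aeval w).div (sc.differentiable_aeval w) (hscne w hw)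
  have hbh : ∀ w : ℂ, ‖w‖ ≤ 1 + C → ‖h w‖ ≤ εk / m := by
    intro w hw
    rw [hh_def]
    simp only [norm_div]
    exact div_le_div₀ hεk0 (boundE w hw) hm0 (hm_lb w (hsub w hw))
  set B : Set ℂ := closedBall (1:ℂ) (C/2) with hB_def
  have hBsub : ∀ x ∈ B, ‖x‖ ≤ 1 + C := by
    intro x hx
    have h1 : ‖x - 1‖ ≤ C/2 := by simpa [hB_def, Complex.dist_eq] using hx
    calc ‖x‖ = ‖(x - 1) + 1‖ := by ring_nf
      _ ≤ ‖x - 1‖ + ‖(1:ℂ)‖ := norm_add_le _ _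
      _ ≤ C/2 + 1 := by simp; linarith
      _ ≤ 1 + C := by linarith
  have hball_in : ∀ x ∈ B, ∀ w ∈ ball x (C/4), ‖w‖ ≤ 1 + C := by
    intro x hx w hw
    have h1 : ‖w - x‖ < C/4 := by simpa [Complex.dist_eq] using hw
    have h2 : ‖x - 1‖ ≤ C/2 := by simpa [hB_def, Complex.dist_eq] using hx
    calc ‖w‖ = ‖(w - x) + (x - 1) + 1‖ := by ring_nf
      _ ≤ ‖(w - x) + (x - 1)‖ + ‖(1:ℂ)‖ := norm_add_le _ _
      _ ≤ ‖w - x‖ + ‖x - 1‖ + ‖(1:ℂ)‖ := by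
          have := norm_add_le (w - x) (x - 1); linarith
      _ ≤ C/4 + C/2 + 1 := by simp; linarith
      _ ≤ 1 + C := by linarith
  -- derivative bound for h on B
  have hderivh : ∀ x ∈ B, ‖deriv h x‖ ≤ 1/2 := by
    intro x hx
    have hd : DifferentiableOn ℂ h (ball x (C/4)) := fun w hw =>
      (hdiffh w (hball_in x hx w hw)).differentiableWithinAt
    have hb : ∀ w ∈ ball x (C/4), ‖h w‖ ≤ εk / m := fun w hw =>
      hbh w (hball_in x hx w hw)
    have := deriv_norm_le_of_ball_bound h x (C/4) (εk/m) (by linarith) hd hb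
    have hle : 2 * (εk/m) / (C/4) ≤ 1/2 := by
      rw [div_le_div_iff₀ (by linarith) (by norm_num)]
      have : εk / m ≤ C / 32 := by
        rw [div_le_div_iff₀ hm0 (by norm_num)]; linarith [hεA]
      linarith
    linarith
  -- Lipschitz bound for h on B
  have hlip : ∀ x ∈ B, ∀ y ∈ B, ‖h y - h x‖ ≤ (1/2) * ‖y - x‖ := by
    intro x hx y hy
    exact Convex.norm_image_sub_le_of_norm_deriv_le
      (fun w hw => hdiffh w (hBsub w hw)) hderivh (convex_closedBall _ _) hx hy
  -- g maps B to B
  have hmaps : Set.MapsTo g B B := by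
    intro x hx
    have h1 : ‖h x‖ ≤ εk / m := hbh x (hBsub x hx)
    have h2 : εk / m ≤ C / 2 := by
      rw [div_le_div_iff₀ hm0 (by norm_num)]; linarith [hεA]
    rw [hB_def, mem_closedBall, dist_eq_norm]
    have : g x - 1 = h x := by rw [hg_def]; ring
    rw [this]
    linarith
  -- contraction
  have hlipOn : LipschitzOnWith (1/2 : NNReal) g B := by
    apply LipschitzOnWith.of_dist_le_mul
    intro x hx y hy
    rw [dist_eq_norm, dist_eq_norm]
    have : g x - g y = h x - h y := by rw [hg_def]; ring
    rw [this]
    have := hlip y hy x hx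
    calc ‖h x - h y‖ ≤ (1/2) * ‖x - y‖ := this
      _ = ((1/2 : NNReal) : ℝ) * ‖x - y‖ := by norm_num
  have hcontr : ContractingWith (1/2 : NNReal) (hmaps.restrict g B B) :=
    ⟨by rw [← NNReal.coe_lt_coe]; norm_num, hlipOn.mapsToRestrict hmaps⟩
  have hBc : IsComplete B := Metric.isClosed_closedBall.isComplete
  have h1B : (1:ℂ) ∈ B := by simp [hB_def]; linarith
  obtain ⟨z, hzB, hzfix, -, -⟩ :=
    ContractingWith.exists_fixedPoint' hBc hmaps hcontr h1B (edist_ne_top _ _)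
  -- z is a root
  have hzabs : ‖z‖ ≤ 1 + C := hBsub z hzB
  have hzroot : ((1 - X) * sc + Ek).IsRoot z := by
    have hfix : g z = z := hzfix
    have h1 : Ek.eval z / sc.eval z = z - 1 := by
      have : (1:ℂ) + Ek.eval z / sc.eval z = z := hfix
      linear_combination this
    have h2 : Ek.eval z = (z - 1) * sc.eval z := by
      rw [← h1, div_mul_cancel₀ _ (hscne z hzabs)]
    simp only [IsRoot, eval_add, eval_mul, eval_sub, eval_one, eval_X]
    rw [h2]; ring
  -- every root in the big disk is a fixed point of g in B, hence equals z
  have hroot_fix : ∀ w : ℂ, ‖w‖ ≤ 1 + C → ((1 - X) * sc + Ek).IsRoot w →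
      g w = w ∧ w ∈ B := by
    intro w hw hroot
    have heval : (1 - w) * sc.eval w + Ek.eval w = 0 := by
      simpa [IsRoot, eval_add, eval_mul, eval_sub, eval_one, eval_X] using hroot
    have hEw : Ek.eval w = (w - 1) * sc.eval w := by linear_combination heval
    have h1 : h w = w - 1 := by
      show Ek.eval w / sc.eval w = w - 1
      rw [hEw, mul_div_cancel_right₀ _ (hscne w hw)]
    constructor
    · show (1:ℂ) + h w = w
      rw [h1]; ring
    · rw [hB_def, mem_closedBall, dist_eq_norm]
      have h2 : ‖h w‖ ≤ εk / m := hbh w hw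
      have h3 : εk / m ≤ C / 2 := by
        rw [div_le_div_iff₀ hm0 (by norm_num)]; linarith [hεA]
      rw [← h1]
      exact h2.trans h3
  have huniq : ∀ w : ℂ, ‖w‖ ≤ 1 + C → ((1 - X) * sc + Ek).IsRoot w → w = z := by
    intro w hw hroot
    obtain ⟨hfixw, hwB⟩ := hroot_fix w hw hroot
    have hgz : g z = z := hzfix
    have h5 : w - z = h w - h z := by
      have : (1 + h w) - (1 + h z) = h w - h z := by ring
      rw [← this]
      show w - z = g w - g z
      rw [hfixw, hgz]
    have h1 : ‖w - z‖ ≤ (1/2) * ‖w - z‖ := by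
      calc ‖w - z‖ = ‖h w - h z‖ := by rw [h5]
        _ ≤ (1/2) * ‖w - z‖ := hlip z hzB w hwB
    have h6 : ‖w - z‖ = 0 := by
      have hn := norm_nonneg (w - z); linarith
    exact sub_eq_zero.1 (norm_eq_zero.1 h6)
  -- simplicity of the root
  set p : Polynomial ℂ := (1 - X) * sc + Ek with hp_def
  have hderiv_eval : p.derivative.eval z =
      -sc.eval z + (1 - z) * sc.derivative.eval z + Ek.derivative.eval z := by
    rw [hp_def]
    simp only [derivative_add, derivative_mul, derivative_sub, derivative_one, derivative_X,
      eval_add, eval_mul, eval_sub, eval_one, eval_X, eval_neg, eval_zero, zero_mul]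
    ring
  have hz2C : ‖z‖ ≤ 1 + 2*C := hsub z hzabs
  have hz1 : ‖1 - z‖ ≤ εk / m := by
    have heval : (1 - z) * sc.eval z + Ek.eval z = 0 := by
      simpa [IsRoot, hp_def, eval_add, eval_mul, eval_sub, eval_one, eval_X] using hzroot
    have h1 : (1 - z) * sc.eval z = -Ek.eval z := by linear_combination heval
    have h2 : ‖1 - z‖ * ‖sc.eval z‖ = ‖Ek.eval z‖ := by
      rw [← norm_mul, h1, norm_neg]
    have h3 : m ≤ ‖sc.eval z‖ := hm_lb z hz2C
    have h4 : ‖Ek.eval z‖ ≤ εk := boundE z hzabs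
    rw [le_div_iff₀ hm0]
    nlinarith [norm_nonneg (1 - z)]
  have hEk' : ‖Ek.derivative.eval z‖ ≤ m/4 := by
    have hd : DifferentiableOn ℂ (fun w => Ek.eval w) (ball z (C/4)) := fun w _ =>
      (Ek.differentiable_aeval w).differentiableWithinAt
    have hb : ∀ w ∈ ball z (C/4), ‖Ek.eval w‖ ≤ εk := fun w hw => by
      simpa using boundE w (hball_in z hzB w hw)
    have hder := deriv_norm_le_of_ball_bound (fun w => Ek.eval w) z (C/4) εk
      (by linarith) hd hb
    rw [Polynomial.deriv] at hder
    have hle : 2 * εk / (C/4) ≤ m/4 := by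
      rw [div_le_div_iff₀ (by linarith) (by norm_num)]
      nlinarith [hεA]
    calc ‖Ek.derivative.eval z‖ = ‖Ek.derivative.eval z‖ := rfl
      _ ≤ 2 * εk / (C/4) := hder
      _ ≤ m/4 := hle
  have hsc' : ‖(1 - z) * sc.derivative.eval z‖ ≤ m/4 := by
    rw [norm_mul]
    have h1 : ‖sc.derivative.eval z‖ ≤ M₂ := hM2_ub z hz2C
    have h2 : εk / m ≤ m / (4 * (M₂ + 1)) := by
      have hεB' : εk * (4 * (M₂ + 1)) ≤ m * m :=
        (le_div_iff₀ (by linarith : (0:ℝ) < 4 * (M₂ + 1))).1 hεB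
      rw [div_le_div_iff₀ hm0 (by linarith)]
      exact hεB'
    have h3 : ‖1 - z‖ ≤ m / (4 * (M₂ + 1)) := hz1.trans h2
    have h4 : (0:ℝ) ≤ ‖1 - z‖ := norm_nonneg _
    have h5 : (0:ℝ) ≤ ‖sc.derivative.eval z‖ := norm_nonneg _
    have h6 : ‖1 - z‖ * ‖sc.derivative.eval z‖ ≤
        (m / (4 * (M₂ + 1))) * M₂ := mul_le_mul h3 h1 h5 (div_pos hm0 (by linarith)).le
    have h7 : (m / (4 * (M₂ + 1))) * M₂ ≤ m/4 := by
      rw [div_mul_eq_mul_div, div_le_div_iff₀ (by linarith) (by norm_num)]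
      nlinarith
    linarith
  have hdlb : m/2 ≤ ‖p.derivative.eval z‖ := by
    rw [hderiv_eval]
    set A := sc.eval z with hA
    set u := (1 - z) * sc.derivative.eval z with hu
    set v := Ek.derivative.eval z with hv
    have hAm : m ≤ ‖A‖ := hm_lb z hz2C
    have h0 : A = -(-A + u + v) + u + v := by ring
    have htri : ‖A‖ ≤ ‖-A + u + v‖ + ‖u‖ + ‖v‖ := by
      calc ‖A‖ = ‖-(-A + u + v) + u + v‖ := by rw [← h0]
        _ ≤ ‖-(-A + u + v) + u‖ + ‖v‖ := norm_add_le _ _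
        _ ≤ ‖-(-A + u + v)‖ + ‖u‖ + ‖v‖ := by
            linarith [norm_add_le (-(-A + u + v)) u]
        _ = ‖-A + u + v‖ + ‖u‖ + ‖v‖ := by
            rw [norm_neg]
    linarith
  have hdne : p.derivative.eval z ≠ 0 := by
    intro h0
    rw [h0] at hdlb
    simp only [norm_zero] at hdlb
    linarith
  have hp0 : p ≠ 0 := by
    intro h0
    apply hdne
    rw [h0]
    simp
  have hmult : p.rootMultiplicity z = 1 := by
    have hge : 0 < p.rootMultiplicity z := (Polynomial.rootMultiplicity_pos hp0).2 hzroot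
    have hlt : ¬ 1 < p.rootMultiplicity z := by
      intro hgt
      exact hdne ((Polynomial.one_lt_rootMultiplicity_iff_isRoot hp0).1 hgt).2
    omega
  exact ⟨z, hzabs, hzroot, hmult, huniq⟩
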